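/- For every n ≥ 2 and every q ≥ 2n there exists a set V of vectors in the nonnegative orthant of ℝⁿ, each of Euclidean norm 1/√n, such that v·w ≤ 1/n − 1/q for all distinct v, w ∈ V, and |V| ≥ c·q^{(n−1)/2} for some constant c > 0 depending only on n. -/

import Mathlib

open Classical in
set_option maxHeartbeats 2000000 in
/-- packing of `Ω(q^{(n-1)/2})` vectors on the positive part of the
sphere of radius `1/√n` with pairwise inner products at most `1/n - 1/q`. -/
theorem stmt_3 (n : ℕ) (hn : 2 ≤ n) :
    ∃ c : ℝ, 0 < c ∧ ∀ q : ℝ, 2 * n ≤ q →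
      ∃ V : Finset (EuclideanSpace ℝ (Fin n)),
        (∀ v ∈ V, (∀ i, 0 ≤ v i) ∧ ‖v‖ = 1 / Real.sqrt n) ∧
        (∀ v ∈ V, ∀ w ∈ V, v ≠ w → (inner ℝ v w : ℝ) ≤ 1 / n - 1 / q) ∧
        c * q ^ (((n : ℝ) - 1) / 2) ≤ V.card := by
  obtain ⟨m, rfl⟩ : ∃ m, n = m + 1 := ⟨n - 1, by omega⟩
  have hm : 1 ≤ m := by omega
  have hNcast : ((m + 1 : ℕ) : ℝ) = (m : ℝ) + 1 := by push_cast; ring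
  set N : ℝ := (m : ℝ) + 1 with hN
  have hNpos : 0 < N := by positivity
  have hN1 : 1 ≤ N := by rw [hN]; nlinarith [Nat.cast_nonneg (α := ℝ) m]
  set r : ℝ := N⁻¹ with hr
  have hrpos : 0 < r := by positivity
  refine ⟨(r / Real.sqrt (2 * N)) ^ m, by positivity, ?_⟩
  intro q hq
  rw [hNcast] at hq
  have hqpos : 0 < q := lt_of_lt_of_le (by positivity) hq
  set δ : ℝ := Real.sqrt (2 * N / q) with hδ
  have hδpos : 0 < δ := Real.sqrt_pos.2 (by positivity)
  have hδsq : δ ^ 2 = 2 * N / q := Real.sq_sqrt (by positivity)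
  set K : ℕ := Nat.floor (r / δ) with hK
  set x : (Fin m → Fin (K + 1)) → Fin m → ℝ := fun k j => δ * ((k j : ℕ) : ℝ) with hx
  have hxnn : ∀ k j, 0 ≤ x k j := fun k j => by
    simp only [hx]; positivity
  have hxK : ∀ k j, x k j ≤ r := by
    intro k j
    have h1 : ((k j : ℕ) : ℝ) ≤ (K : ℝ) := by exact_mod_cast Nat.le_of_lt_succ (k j).isLt
    have h2 : (K : ℝ) ≤ r / δ := Nat.floor_le (by positivity)
    calc x k j ≤ δ * (r / δ) := mul_le_mul_of_nonneg_left (h1.trans h2) hδpos.le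
    _ = r := by field_simp
  set S : (Fin m → Fin (K + 1)) → ℝ := fun k => ∑ j, (x k j) ^ 2 with hSdef
  have hS0 : ∀ k, 0 ≤ S k := fun k => Finset.sum_nonneg fun j _ => sq_nonneg _
  have hS1 : ∀ k, S k ≤ 1 := by
    intro k
    have h1 : S k ≤ ∑ _j : Fin m, r ^ 2 := Finset.sum_le_sum fun j _ => by
      nlinarith [hxK k j, hxnn k j]
    rw [Finset.sum_const, Finset.card_univ, Fintype.card_fin, nsmul_eq_mul] at h1
    have hmN : (m : ℝ) ≤ N := by simp [hN]
    have h2 : (m : ℝ) * r ^ 2 ≤ 1 := by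
      rw [hr, inv_pow]
      rw [mul_inv_le_iff₀ (by positivity)]
      nlinarith
    linarith
  set f : (Fin m → Fin (K + 1)) → EuclideanSpace ℝ (Fin (m + 1)) :=
    fun k => (WithLp.equiv 2 (Fin (m + 1) → ℝ)).symm
      (fun i => (Real.sqrt N)⁻¹ * Fin.snoc (α := fun _ => ℝ) (x k) (Real.sqrt (1 - S k)) i) with hf
  have hfapp : ∀ k i, f k i = (Real.sqrt N)⁻¹ * Fin.snoc (α := fun _ => ℝ) (x k) (Real.sqrt (1 - S k)) i := by
    intro k i; simp [hf, WithLp.equiv_symm_apply, PiLp.toLp_apply]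
  have hsqrtN : 0 < Real.sqrt N := Real.sqrt_pos.2 hNpos
  have hNN : (Real.sqrt N)⁻¹ * (Real.sqrt N)⁻¹ = N⁻¹ := by
    rw [← Real.sqrt_inv]; exact Real.mul_self_sqrt (by positivity)
  have hinj : Function.Injective f := by
    intro k k' hkk
    funext j
    have h1 : f k j.castSucc = f k' j.castSucc := by rw [hkk]
    rw [hfapp, hfapp, Fin.snoc_castSucc, Fin.snoc_castSucc] at h1
    have h2 : x k j = x k' j := by
      field_simp at h1; exact h1
    have h3 : ((k j : ℕ) : ℝ) = ((k' j : ℕ) : ℝ) := by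
      simp only [hx] at h2
      exact mul_left_cancel₀ hδpos.ne' h2
    exact Fin.ext (by exact_mod_cast h3)
  refine ⟨Finset.univ.image f, ?_, ?_, ?_⟩
  · intro v hv
    obtain ⟨k, _, rfl⟩ := Finset.mem_image.1 hv
    constructor
    · intro i
      rw [hfapp]
      refine mul_nonneg (by positivity) ?_
      refine Fin.lastCases ?_ ?_ i
      · rw [Fin.snoc_last]; positivity
      · intro j; rw [Fin.snoc_castSucc]; exact hxnn k j
    · rw [EuclideanSpace.norm_eq]
      have hsum : ∑ i, ‖f k i‖ ^ 2 = N⁻¹ := by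
        have h0 : ∀ i, ‖f k i‖ ^ 2 = N⁻¹ * (Fin.snoc (α := fun _ => ℝ) (x k) (Real.sqrt (1 - S k)) i) ^ 2 := by
          intro i
          rw [hfapp, Real.norm_eq_abs, sq_abs, mul_pow, ← Real.sqrt_inv, Real.sq_sqrt (by positivity)]
        simp only [h0, ← Finset.mul_sum]
        rw [Fin.sum_univ_castSucc]
        simp only [Fin.snoc_castSucc, Fin.snoc_last]
        rw [Real.sq_sqrt (by linarith [hS1 k])]
        have hSk : ∑ j : Fin m, x k j ^ 2 = S k := rfl
        rw [hSk]; ring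
      rw [hsum, Real.sqrt_inv, one_div, hNcast]
  · intro v hv w hw hvw
    obtain ⟨k, _, rfl⟩ := Finset.mem_image.1 hv
    obtain ⟨k', _, rfl⟩ := Finset.mem_image.1 hw
    have hkk : k ≠ k' := fun h => hvw (by rw [h])
    obtain ⟨j0, hj0⟩ := Function.ne_iff.1 hkk
    set P : ℝ := ∑ j, x k j * x k' j with hP
    set A : ℝ := ∑ j, (x k j - x k' j) ^ 2 with hA
    have hinner : (inner ℝ (f k) (f k') : ℝ) =
        N⁻¹ * (P + Real.sqrt (1 - S k) * Real.sqrt (1 - S k')) := by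
      rw [PiLp.inner_apply]
      have h0 : ∀ i, (inner ℝ (f k i) (f k' i) : ℝ) =
          N⁻¹ * (Fin.snoc (α := fun _ => ℝ) (x k) (Real.sqrt (1 - S k)) i *
            Fin.snoc (α := fun _ => ℝ) (x k') (Real.sqrt (1 - S k')) i) := by
        intro i
        rw [RCLike.inner_apply', conj_trivial, hfapp, hfapp]
        calc (Real.sqrt N)⁻¹ * Fin.snoc (α := fun _ => ℝ) (x k) (Real.sqrt (1 - S k)) i *
              ((Real.sqrt N)⁻¹ * Fin.snoc (α := fun _ => ℝ) (x k') (Real.sqrt (1 - S k')) i)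
            = ((Real.sqrt N)⁻¹ * (Real.sqrt N)⁻¹) *
              (Fin.snoc (α := fun _ => ℝ) (x k) (Real.sqrt (1 - S k)) i *
                Fin.snoc (α := fun _ => ℝ) (x k') (Real.sqrt (1 - S k')) i) := by ring
          _ = _ := by rw [hNN]
      simp only [h0, ← Finset.mul_sum]
      rw [Fin.sum_univ_castSucc]
      simp only [Fin.snoc_castSucc, Fin.snoc_last]
      rfl
    have hAP : A = S k + S k' - 2 * P := by
      have e : ∀ j : Fin m, (x k j - x k' j) ^ 2
          = x k j ^ 2 + x k' j ^ 2 - 2 * (x k j * x k' j) := fun j => by ring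
      simp only [hA, e]
      rw [Finset.sum_sub_distrib, Finset.sum_add_distrib, ← Finset.mul_sum]
    have hAδ : δ ^ 2 ≤ A := by
      have hne : (k j0 : ℕ) ≠ (k' j0 : ℕ) := fun h => hj0 (Fin.ext h)
      have key : (1 : ℝ) ≤ (((k j0 : ℕ) : ℝ) - ((k' j0 : ℕ) : ℝ)) ^ 2 := by
        rcases lt_or_gt_of_ne hne with h | h
        · have h' : ((k j0 : ℕ) : ℝ) + 1 ≤ ((k' j0 : ℕ) : ℝ) := by exact_mod_cast h
          nlinarith
        · have h' : ((k' j0 : ℕ) : ℝ) + 1 ≤ ((k j0 : ℕ) : ℝ) := by exact_mod_cast h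
          nlinarith
      have e1 : (x k j0 - x k' j0) ^ 2
          = δ ^ 2 * ((((k j0 : ℕ) : ℝ) - ((k' j0 : ℕ) : ℝ)) ^ 2) := by
        simp only [hx]; ring
      have h2 : (x k j0 - x k' j0) ^ 2 ≤ A :=
        Finset.single_le_sum (f := fun j => (x k j - x k' j) ^ 2)
          (fun j _ => sq_nonneg _) (Finset.mem_univ j0)
      have h4 : δ ^ 2 * 1 ≤ δ ^ 2 * ((((k j0 : ℕ) : ℝ) - ((k' j0 : ℕ) : ℝ)) ^ 2) :=
        mul_le_mul_of_nonneg_left key (sq_nonneg δ)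
      rw [mul_one] at h4
      rw [e1] at h2
      linarith
    have hgm : Real.sqrt (1 - S k) * Real.sqrt (1 - S k') ≤ 1 - (S k + S k') / 2 := by
      nlinarith [sq_nonneg (Real.sqrt (1 - S k) - Real.sqrt (1 - S k')),
        Real.sq_sqrt (show (0:ℝ) ≤ 1 - S k by linarith [hS1 k]),
        Real.sq_sqrt (show (0:ℝ) ≤ 1 - S k' by linarith [hS1 k'])]
    have hδq : δ ^ 2 / 2 = N / q := by rw [hδsq]; ring
    have hsum : P + Real.sqrt (1 - S k) * Real.sqrt (1 - S k') ≤ 1 - N / q := by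
      have hPA : P = (S k + S k' - A) / 2 := by linarith
      rw [hPA]
      have : (S k + S k' - A) / 2 + (1 - (S k + S k') / 2) ≤ 1 - N / q := by
        have : N / q ≤ A / 2 := by linarith
        linarith
      linarith
    rw [hinner, hNcast]
    calc N⁻¹ * (P + Real.sqrt (1 - S k) * Real.sqrt (1 - S k'))
        ≤ N⁻¹ * (1 - N / q) := mul_le_mul_of_nonneg_left hsum (by positivity)
      _ = 1 / N - 1 / q := by field_simp
  · rw [Finset.card_image_of_injective _ hinj, Finset.card_univ]
    have hcard : Fintype.card (Fin m → Fin (K + 1)) = (K + 1) ^ m := by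
      simp [Fintype.card_fun]
    rw [hcard]
    have hexp : (((m + 1 : ℕ) : ℝ) - 1) / 2 = (m : ℝ) / 2 := by rw [hNcast, hN]; ring
    rw [hexp]
    have hq2 : q ^ ((m : ℝ) / 2) = Real.sqrt q ^ m := by
      rw [Real.sqrt_eq_rpow, ← Real.rpow_natCast (q ^ ((1:ℝ)/2)) m, ← Real.rpow_mul hqpos.le]
      ring_nf
    rw [hq2]
    have hsq : Real.sqrt q > 0 := Real.sqrt_pos.2 hqpos
    have h1 : (r / Real.sqrt (2 * N)) ^ m * Real.sqrt q ^ m = (r / δ) ^ m := by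
      rw [← mul_pow]
      congr 1
      rw [hδ, Real.sqrt_div (by positivity) q]
      field_simp
    rw [h1]
    have h2 : r / δ ≤ (K : ℝ) + 1 := le_of_lt (Nat.lt_floor_add_one _)
    have h3 : (r / δ) ^ m ≤ ((K : ℝ) + 1) ^ m := pow_le_pow_left₀ (by positivity) h2 m
    calc (r / δ) ^ m ≤ ((K : ℝ) + 1) ^ m := h3
      _ = (((K + 1) ^ m : ℕ) : ℝ) := by push_cast; ring
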